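/- Let (Ω, m) be a measure space and let 1 < p < ∞. Let R : B(L^1(Ω,m), L^p(Ω,m)) → L^p(Ω,m) be a bounded linear operator, where B(L^1, L^p) is the Banach space of bounded linear operators with the operator norm. Let (X_1,…,X_n) and (Y_1,…,Y_n) be measurable partitions of Ω. Then for every U ∈ B(L^1(Ω,m), L^p(Ω,m)): (∑_{i=1}^n ‖χ_{X_i} · R(χ_{Y_i} U)‖_p^p)^{1/p} ≤ ‖R‖ · ‖U‖, where χ_Y U denotes the operator a ↦ χ_Y · U(a). -/

import Mathlib

open MeasureTheory Set
open scoped ENNReal NNReal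

/-- The operator `P_X : L^P → L^P`, `f ↦ χ_X · f`, of multiplication by the indicator
function of a measurable set `X`. -/
noncomputable def indicatorCLM {Ω : Type*} [MeasurableSpace Ω] (m : Measure Ω) (P : ℝ≥0∞)
    [Fact (1 ≤ P)] (X : Set Ω) (hX : MeasurableSet X) :
    Lp ℂ P m →L[ℂ] Lp ℂ P m :=
  LinearMap.mkContinuous
    { toFun := fun f => ((Lp.memLp f).indicator hX).toLp (X.indicator f)
      map_add' := by
        intro f g
        have key : X.indicator ⇑(f + g) =ᵐ[m] X.indicator ⇑f + X.indicator ⇑g := by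
          filter_upwards [Lp.coeFn_add f g] with t ht
          by_cases h : t ∈ X
          · rw [Pi.add_apply, Set.indicator_of_mem h, Set.indicator_of_mem h,
              Set.indicator_of_mem h, ht, Pi.add_apply]
          · rw [Pi.add_apply, Set.indicator_of_notMem h, Set.indicator_of_notMem h,
              Set.indicator_of_notMem h, add_zero]
        exact (MemLp.toLp_congr _
          (((Lp.memLp f).indicator hX).add ((Lp.memLp g).indicator hX)) key).trans
          (MemLp.toLp_add _ _)
      map_smul' := by
        intro c f
        have key : X.indicator ⇑(c • f) =ᵐ[m] c • X.indicator ⇑f := by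
          filter_upwards [Lp.coeFn_smul c f] with t ht
          by_cases h : t ∈ X
          · rw [Pi.smul_apply, Set.indicator_of_mem h, Set.indicator_of_mem h, ht, Pi.smul_apply]
          · rw [Pi.smul_apply, Set.indicator_of_notMem h, Set.indicator_of_notMem h, smul_zero]
        simp only [RingHom.id_apply]
        exact (MemLp.toLp_congr _
          (((Lp.memLp f).indicator hX).const_smul c) key).trans
          (MemLp.toLp_const_smul c _) }
    1 (by
      intro f
      simp only [LinearMap.coe_mk, AddHom.coe_mk, one_mul]
      rw [Lp.norm_toLp, Lp.norm_def]
      exact ENNReal.toReal_mono (Lp.eLpNorm_ne_top f) (eLpNorm_indicator_le _))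


section Aux

variable {Ω : Type*} [MeasurableSpace Ω] {m : Measure Ω}

lemma Lp_coeFn_sum {P : ℝ≥0∞} {ι : Type*} (s : Finset ι) (f : ι → Lp ℂ P m) :
    ⇑(∑ i ∈ s, f i) =ᵐ[m] fun x => ∑ i ∈ s, f i x := by
  classical
  induction s using Finset.cons_induction with
  | empty =>
      simp only [Finset.sum_empty]
      exact Lp.coeFn_zero ℂ P m
  | cons a s ha ih =>
      simp only [Finset.sum_cons]
      filter_upwards [Lp.coeFn_add (f a) (∑ i ∈ s, f i), ih] with x h1 h2
      rw [h1, Pi.add_apply, h2]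

lemma indicatorCLM_coeFn (P : ℝ≥0∞) [Fact (1 ≤ P)]
    (X : Set Ω) (hX : MeasurableSet X) (f : Lp ℂ P m) :
    ⇑(indicatorCLM m P X hX f) =ᵐ[m] X.indicator ⇑f :=
  by
  simp only [indicatorCLM, LinearMap.mkContinuous_apply, LinearMap.coe_mk, AddHom.coe_mk]
  exact MemLp.coeFn_toLp _

lemma norm_sum_smul_indicatorCLM (P : ℝ≥0∞) [Fact (1 ≤ P)]
    {n : ℕ} (Z : Fin n → Set Ω) (hZ : ∀ i, MeasurableSet (Z i))
    (hZd : Pairwise (Function.onFun Disjoint Z)) (hZu : (⋃ i, Z i) = Set.univ)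
    (ε : Fin n → ℂ) (hε : ∀ i, ‖ε i‖ = 1) (g : Lp ℂ P m) :
    ‖∑ i, ε i • indicatorCLM m P (Z i) (hZ i) g‖ = ‖g‖ := by
  rw [Lp.norm_def, Lp.norm_def]
  congr 1
  apply eLpNorm_congr_norm_ae
  have h2 : ∀ᵐ x ∂m, ∀ i, (ε i • indicatorCLM m P (Z i) (hZ i) g : Lp ℂ P m) x
      = ε i • (Z i).indicator (⇑g) x := by
    rw [ae_all_iff]
    intro i
    filter_upwards [Lp.coeFn_smul (ε i) (indicatorCLM m P (Z i) (hZ i) g),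
      indicatorCLM_coeFn P (Z i) (hZ i) g] with x ha hb
    rw [ha, Pi.smul_apply, hb]
  filter_upwards [Lp_coeFn_sum Finset.univ (fun i => ε i • indicatorCLM m P (Z i) (hZ i) g),
    h2] with x h1 h2
  rw [h1]
  obtain ⟨i₀, hi₀⟩ : ∃ i, x ∈ Z i := by
    have hx := Set.mem_univ x
    rw [← hZu] at hx
    exact Set.mem_iUnion.mp hx
  have key : ∀ j, j ≠ i₀ → x ∉ Z j := fun j hj hx => Set.disjoint_left.mp (hZd hj) hx hi₀
  have hsum : (∑ i, (ε i • indicatorCLM m P (Z i) (hZ i) g : Lp ℂ P m) x) = ε i₀ • g x := by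
    rw [Finset.sum_eq_single i₀]
    · rw [h2 i₀, Set.indicator_of_mem hi₀]
    · intro j _ hj
      rw [h2 j, Set.indicator_of_notMem (key j hj), smul_zero]
    · simp
  rw [hsum, norm_smul, hε i₀, one_mul]

lemma sum_norm_pow_indicatorCLM (p : ℝ) (hp : 0 < p)
    [Fact (1 ≤ ENNReal.ofReal p)] {n : ℕ} (X : Fin n → Set Ω) (hX : ∀ i, MeasurableSet (X i))
    (hXd : Pairwise (Function.onFun Disjoint X)) (f : Fin n → Lp ℂ (ENNReal.ofReal p) m) :
    ∑ i, ‖indicatorCLM m (ENNReal.ofReal p) (X i) (hX i) (f i)‖ ^ p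
      = ‖∑ i, indicatorCLM m (ENNReal.ofReal p) (X i) (hX i) (f i)‖ ^ p := by
  classical
  have hP0 : ENNReal.ofReal p ≠ 0 := by
    rw [Ne, ENNReal.ofReal_eq_zero]
    linarith
  have hPt : ENNReal.ofReal p ≠ ⊤ := ENNReal.ofReal_ne_top
  have hPr : (ENNReal.ofReal p).toReal = p := ENNReal.toReal_ofReal hp.le
  have key : ∀ g : Lp ℂ (ENNReal.ofReal p) m,
      ‖g‖ ^ p = (∫⁻ x, (‖g x‖₊ : ℝ≥0∞) ^ p ∂m).toReal := by
    intro g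
    rw [Lp.norm_def, eLpNorm_eq_lintegral_rpow_enorm_toReal hP0 hPt, hPr, ENNReal.toReal_rpow,
      ← ENNReal.rpow_mul, one_div_mul_cancel (ne_of_gt hp), ENNReal.rpow_one]
    simp only [enorm_eq_nnnorm]
  have hfin : ∀ g : Lp ℂ (ENNReal.ofReal p) m,
      (∫⁻ x, (‖g x‖₊ : ℝ≥0∞) ^ p ∂m) ≠ ⊤ := by
    intro g
    have h := Lp.eLpNorm_lt_top g
    rw [eLpNorm_eq_lintegral_rpow_enorm_toReal hP0 hPt, hPr] at h
    simp only [enorm_eq_nnnorm] at h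
    intro hcon
    rw [hcon, ENNReal.top_rpow_of_pos (by positivity : (0:ℝ) < 1 / p)] at h
    exact (lt_irrefl _ h).elim
  simp only [key]
  rw [← ENNReal.toReal_sum (fun i _ => hfin _)]
  congr 1
  rw [← lintegral_finset_sum'
    (f := fun i x => (‖(indicatorCLM m (ENNReal.ofReal p) (X i) (hX i) (f i)) x‖₊ : ℝ≥0∞) ^ p)
    Finset.univ
    (fun i _ => ENNReal.continuous_rpow_const.measurable.comp_aemeasurable
      (by simpa only [enorm_eq_nnnorm] using (Lp.aestronglyMeasurable
        (indicatorCLM m (ENNReal.ofReal p) (X i) (hX i) (f i))).enorm))]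
  apply lintegral_congr_ae
  have h2 : ∀ᵐ x ∂m, ∀ i,
      (indicatorCLM m (ENNReal.ofReal p) (X i) (hX i) (f i)) x
        = (X i).indicator (⇑(f i)) x := by
    rw [ae_all_iff]
    intro i
    exact indicatorCLM_coeFn (ENNReal.ofReal p) (X i) (hX i) (f i)
  filter_upwards [Lp_coeFn_sum Finset.univ
    (fun i => indicatorCLM m (ENNReal.ofReal p) (X i) (hX i) (f i)), h2] with x h1 h2
  rw [h1]
  by_cases h : ∃ i₀, x ∈ X i₀
  · obtain ⟨i₀, hi₀⟩ := h
    have key2 : ∀ j, j ≠ i₀ → x ∉ X j := fun j hj hx => Set.disjoint_left.mp (hXd hj) hx hi₀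
    rw [Finset.sum_eq_single i₀, Finset.sum_eq_single i₀]
    · intro j _ hj
      rw [h2 j, Set.indicator_of_notMem (key2 j hj)]
    · simp
    · intro j _ hj
      rw [h2 j, Set.indicator_of_notMem (key2 j hj), nnnorm_zero, ENNReal.coe_zero,
        ENNReal.zero_rpow_of_pos hp]
    · simp
  · push_neg at h
    have hz : ∀ i, (indicatorCLM m (ENNReal.ofReal p) (X i) (hX i) (f i)) x = 0 := fun i => by
      rw [h2 i, Set.indicator_of_notMem (h i)]
    rw [Finset.sum_congr rfl (fun i _ => by
      rw [hz i, nnnorm_zero, ENNReal.coe_zero, ENNReal.zero_rpow_of_pos hp]),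
      Finset.sum_congr rfl (fun i _ => hz i)]
    simp [ENNReal.zero_rpow_of_pos hp]

lemma bool_sign_diag (n : ℕ) (i : Fin n) :
    ∑ ε : Fin n → Bool, (if ε i then (1:ℂ) else -1) * (if ε i then (1:ℂ) else -1)
      = (2:ℂ) ^ n := by
  have h : ∀ ε : Fin n → Bool,
      (if ε i then (1:ℂ) else -1) * (if ε i then (1:ℂ) else -1) = 1 := by
    intro ε; cases ε i <;> norm_num
  rw [Finset.sum_congr rfl fun ε _ => h ε, Finset.sum_const, Finset.card_univ]
  simp [Fintype.card_fun]

lemma bool_sign_orthogonal (n : ℕ) (i j : Fin n) (hij : i ≠ j) :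
    ∑ ε : Fin n → Bool, (if ε i then (1:ℂ) else -1) * (if ε j then (1:ℂ) else -1) = 0 := by
  classical
  apply Finset.sum_ninvolution (fun ε => Function.update ε i (!(ε i)))
  · intro ε
    have h1 : Function.update ε i (!(ε i)) i = !(ε i) := Function.update_self ..
    have h2 : Function.update ε i (!(ε i)) j = ε j := Function.update_of_ne (Ne.symm hij) _ _
    rw [h1, h2]
    cases ε i <;> cases ε j <;> norm_num
  · intro ε _
    intro hcon
    have := congrFun hcon i
    rw [Function.update_self] at this
    cases h : ε i <;> rw [h] at this <;> simp at this
  · intro ε; exact Finset.mem_univ _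
  · intro ε
    funext k
    by_cases hk : k = i
    · subst hk
      simp [Function.update_self]
    · simp [Function.update_of_ne hk]

end Aux

/-- let `(Ω, m)` be a measure space, `1 < p < ∞`, let
`R : B(L^1, L^p) → L^p` be a bounded linear operator, and let `(X_i)`, `(Y_i)` be
measurable partitions of `Ω`.  Then for every bounded operator `U : L^1 → L^p`:
`(∑_i ‖χ_{X_i}·R(χ_{Y_i}U)‖_p^p)^{1/p} ≤ ‖R‖·‖U‖`, where `(χ_Y U)(a) = χ_Y·U(a)`. -/
theorem stmt17 {Ω : Type*} [MeasurableSpace Ω] (m : Measure Ω)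
    (p : ℝ) (hp : 1 < p) [Fact (1 ≤ ENNReal.ofReal p)]
    (R : (Lp ℂ 1 m →L[ℂ] Lp ℂ (ENNReal.ofReal p) m) →L[ℂ] Lp ℂ (ENNReal.ofReal p) m)
    (n : ℕ) (X Y : Fin n → Set Ω)
    (hX : ∀ i, MeasurableSet (X i)) (hY : ∀ i, MeasurableSet (Y i))
    (hXd : Pairwise (Function.onFun Disjoint X)) (hXu : (⋃ i, X i) = Set.univ)
    (hYd : Pairwise (Function.onFun Disjoint Y)) (hYu : (⋃ i, Y i) = Set.univ)
    (U : Lp ℂ 1 m →L[ℂ] Lp ℂ (ENNReal.ofReal p) m) :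
    (∑ i, ‖indicatorCLM m (ENNReal.ofReal p) (X i) (hX i)
        (R ((indicatorCLM m (ENNReal.ofReal p) (Y i) (hY i)).comp U))‖ ^ p) ^ (1 / p) ≤
      ‖R‖ * ‖U‖ := by
  classical
  have hp0 : 0 < p := lt_trans one_pos hp
  set P := ENNReal.ofReal p with hP
  set B : Fin n → Fin n → Lp ℂ P m := fun i j =>
    indicatorCLM m P (X i) (hX i) (R ((indicatorCLM m P (Y j) (hY j)).comp U)) with hB
  rw [sum_norm_pow_indicatorCLM p hp0 X hX hXd
    (fun i => R ((indicatorCLM m P (Y i) (hY i)).comp U)),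
    ← Real.rpow_mul (norm_nonneg _), mul_one_div_cancel (ne_of_gt hp0), Real.rpow_one]
  -- now goal : ‖∑ i, B i i‖ ≤ ‖R‖ * ‖U‖
  set sgn : (Fin n → Bool) → Fin n → ℂ := fun ε i => if ε i then 1 else -1 with hsgn
  have hsgn1 : ∀ ε i, ‖sgn ε i‖ = 1 := by
    intro ε i
    simp only [hsgn]
    split_ifs <;> simp
  set S : (Fin n → Bool) → (Lp ℂ 1 m →L[ℂ] Lp ℂ P m) :=
    fun ε => ∑ j, sgn ε j • (indicatorCLM m P (Y j) (hY j)).comp U with hS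
  have hSnorm : ∀ ε, ‖S ε‖ ≤ ‖U‖ := by
    intro ε
    apply ContinuousLinearMap.opNorm_le_bound _ (norm_nonneg U)
    intro a
    have hEq : S ε a = ∑ j, sgn ε j • indicatorCLM m P (Y j) (hY j) (U a) := by
      rw [hS]
      simp [ContinuousLinearMap.sum_apply, ContinuousLinearMap.smul_apply,
        ContinuousLinearMap.comp_apply]
    rw [hEq, norm_sum_smul_indicatorCLM P Y hY hYd hYu _ (hsgn1 ε) (U a)]
    exact U.le_opNorm a
  set F : (Fin n → Bool) → Lp ℂ P m :=
    fun ε => ∑ i, sgn ε i • indicatorCLM m P (X i) (hX i) (R (S ε)) with hF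
  have hFnorm : ∀ ε, ‖F ε‖ ≤ ‖R‖ * ‖U‖ := by
    intro ε
    rw [hF]
    rw [norm_sum_smul_indicatorCLM P X hX hXd hXu _ (hsgn1 ε) (R (S ε))]
    calc ‖R (S ε)‖ ≤ ‖R‖ * ‖S ε‖ := R.le_opNorm _
    _ ≤ ‖R‖ * ‖U‖ := mul_le_mul_of_nonneg_left (hSnorm ε) (norm_nonneg R)
  have hexp : ∀ ε, F ε = ∑ i, ∑ j, (sgn ε i * sgn ε j) • B i j := by
    intro ε
    have h1 : R (S ε) = ∑ j, sgn ε j • R ((indicatorCLM m P (Y j) (hY j)).comp U) := by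
      rw [hS, map_sum]
      exact Finset.sum_congr rfl fun j _ => _root_.map_smul R _ _
    rw [hF]
    refine Finset.sum_congr rfl fun i _ => ?_
    rw [h1, map_sum, Finset.smul_sum]
    refine Finset.sum_congr rfl fun j _ => ?_
    rw [_root_.map_smul, smul_smul]
  have havg : ∑ ε : Fin n → Bool, F ε = ((2:ℂ) ^ n) • ∑ i, B i i := by
    calc ∑ ε : Fin n → Bool, F ε
        = ∑ ε : Fin n → Bool, ∑ i, ∑ j, (sgn ε i * sgn ε j) • B i j :=
          Finset.sum_congr rfl fun ε _ => hexp ε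
      _ = ∑ i, ∑ j, (∑ ε : Fin n → Bool, sgn ε i * sgn ε j) • B i j := by
          rw [Finset.sum_comm]
          refine Finset.sum_congr rfl fun i _ => ?_
          rw [Finset.sum_comm]
          refine Finset.sum_congr rfl fun j _ => ?_
          rw [Finset.sum_smul]
      _ = ∑ i, ((2:ℂ) ^ n) • B i i := by
          refine Finset.sum_congr rfl fun i _ => ?_
          rw [Finset.sum_eq_single i]
          · rw [bool_sign_diag n i]
          · intro j _ hj
            rw [bool_sign_orthogonal n i j (Ne.symm hj), zero_smul]
          · simp
      _ = ((2:ℂ) ^ n) • ∑ i, B i i := by rw [Finset.smul_sum]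
  have h2 : ‖((2:ℂ) ^ n) • ∑ i, B i i‖ ≤ ∑ ε : Fin n → Bool, ‖F ε‖ := by
    rw [← havg]
    exact norm_sum_le _ _
  have h3 : ∑ ε : Fin n → Bool, ‖F ε‖ ≤ (2:ℝ) ^ n * (‖R‖ * ‖U‖) := by
    calc ∑ ε : Fin n → Bool, ‖F ε‖ ≤ ∑ _ε : Fin n → Bool, (‖R‖ * ‖U‖) :=
          Finset.sum_le_sum fun ε _ => hFnorm ε
    _ = (2:ℝ) ^ n * (‖R‖ * ‖U‖) := by
        rw [Finset.sum_const, Finset.card_univ, nsmul_eq_mul]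
        simp [Fintype.card_fun]
  have h4 : ‖((2:ℂ) ^ n) • ∑ i, B i i‖ = (2:ℝ) ^ n * ‖∑ i, B i i‖ := by
    rw [norm_smul, norm_pow]
    norm_num
  have h5 : (2:ℝ) ^ n * ‖∑ i, B i i‖ ≤ (2:ℝ) ^ n * (‖R‖ * ‖U‖) := by
    rw [← h4]
    exact le_trans h2 h3
  exact le_of_mul_le_mul_left h5 (by positivity)
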